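/- Assume NMA⁻: for every set X there is a countably additive probability measure λ on the full power set of [X]^{<𝔠} such that λ({A ∈ [X]^{<𝔠} : x ∈ A}) = 1 for every x ∈ X. Then every Boolean algebra 𝔄, all of whose subalgebras of cardinality < 𝔠 carry strictly positive finitely additive probability measures, itself carries a strictly positive finitely additive probability measure. -/

import Mathlib

open Cardinal

/-- `B` is a (Boolean) subalgebra of `A`. -/
def IsSubBA {A : Type*} [BooleanAlgebra A] (B : Set A) : Prop :=
  ⊥ ∈ B ∧ ⊤ ∈ B ∧ (∀ a ∈ B, aᶜ ∈ B) ∧ ∀ a ∈ B, ∀ b ∈ B, a ⊔ b ∈ B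

/-- `μ` is a finitely additive probability measure on the subalgebra `B`. -/
def FAProbOn {A : Type*} [BooleanAlgebra A] (B : Set A) (μ : A → ℝ) : Prop :=
  μ ⊤ = 1 ∧ (∀ a ∈ B, 0 ≤ μ a) ∧
    ∀ a ∈ B, ∀ b ∈ B, a ⊓ b = ⊥ → μ (a ⊔ b) = μ a + μ b

/-- `μ` is strictly positive on `B`. -/
def SPOn {A : Type*} [BooleanAlgebra A] (B : Set A) (μ : A → ℝ) : Prop :=
  ∀ a ∈ B, a ≠ ⊥ → 0 < μ a

section Aux

variable {A : Type} [BooleanAlgebra A]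

/-- Stages of the generated Boolean subalgebra. -/
def Dset (B : Set A) : ℕ → Set A
  | 0 => B ∪ {⊥, ⊤}
  | n + 1 => (Dset B n ∪ compl '' Dset B n) ∪ Set.image2 (· ⊔ ·) (Dset B n) (Dset B n)

/-- The Boolean subalgebra generated by `B`. -/
def genBA (B : Set A) : Set A := ⋃ n, Dset B n

lemma Dset_mono (B : Set A) : Monotone (Dset B) :=
  monotone_nat_of_le_succ fun _ _ ha => Or.inl (Or.inl ha)

lemma subset_genBA (B : Set A) : B ⊆ genBA B :=
  fun a ha => Set.mem_iUnion.2 ⟨0, Or.inl ha⟩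

lemma isSubBA_genBA (B : Set A) : IsSubBA (genBA B) := by
  refine ⟨Set.mem_iUnion.2 ⟨0, Or.inr (Or.inl rfl)⟩,
    Set.mem_iUnion.2 ⟨0, Or.inr (Or.inr rfl)⟩, ?_, ?_⟩
  · intro a ha
    obtain ⟨n, hn⟩ := Set.mem_iUnion.1 ha
    exact Set.mem_iUnion.2 ⟨n + 1, Or.inl (Or.inr ⟨a, hn, rfl⟩)⟩
  · intro a ha b hb
    obtain ⟨n, hn⟩ := Set.mem_iUnion.1 ha
    obtain ⟨m, hm⟩ := Set.mem_iUnion.1 hb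
    refine Set.mem_iUnion.2 ⟨max n m + 1, Or.inr ?_⟩
    exact Set.mem_image2_of_mem (Dset_mono B (le_max_left n m) hn)
      (Dset_mono B (le_max_right n m) hm)

lemma mk_Dset_le (B : Set A) (n : ℕ) : #(Dset B n) ≤ #B + ℵ₀ := by
  induction n with
  | zero =>
    refine (mk_union_le _ _).trans (add_le_add_right ?_ _)
    exact le_of_lt ((Set.Finite.insert _ (Set.finite_singleton _)).lt_aleph0)
  | succ n ih =>
    have hκ : ℵ₀ ≤ #B + ℵ₀ := le_add_self
    calc #(Dset B (n + 1))
        ≤ (#(Dset B n) + #(compl '' Dset B n)) + #(Dset B n) * #(Dset B n) :=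
          (mk_union_le _ _).trans (add_le_add (mk_union_le _ _) mk_image2_le)
      _ ≤ ((#B + ℵ₀) + (#B + ℵ₀)) + (#B + ℵ₀) * (#B + ℵ₀) := by
          gcongr <;> first | exact ih | exact (mk_image_le).trans ih
      _ = #B + ℵ₀ := by
          rw [Cardinal.add_eq_self hκ, Cardinal.mul_eq_self hκ, Cardinal.add_eq_self hκ]

lemma mk_genBA_lt (B : Set A) (hB : #B < continuum) : #(genBA B) < continuum := by
  have h1 : #(genBA B) ≤ ℵ₀ * (#B + ℵ₀) := by
    refine (mk_iUnion_le _).trans ?_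
    rw [mk_nat]
    exact mul_le_mul_right (ciSup_le' (mk_Dset_le B)) _
  have h2 : ℵ₀ * (#B + ℵ₀) ≤ #B + ℵ₀ := by
    calc ℵ₀ * (#B + ℵ₀) ≤ (#B + ℵ₀) * (#B + ℵ₀) := mul_le_mul_left le_add_self _
      _ = #B + ℵ₀ := Cardinal.mul_eq_self le_add_self
  exact lt_of_le_of_lt (h1.trans h2) (Cardinal.add_lt_of_lt aleph0_le_continuum hB
    aleph0_lt_continuum)

end Aux

/-- Assuming NMA⁻ (for every set `X` there is a countably additive probability measure
on the power set of `[X]^{<𝔠}` giving measure one to `{A : x ∈ A}` for each `x ∈ X`),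
every Boolean algebra all of whose subalgebras of size `< 𝔠` carry strictly positive
finitely additive probability measures carries one itself. -/
theorem stmt_11
    (hNMA : ∀ X : Type, ∃ lam : @MeasureTheory.Measure {A : Set X // #A < continuum} ⊤,
      lam Set.univ = 1 ∧ ∀ x : X, lam {A | x ∈ A.1} = 1)
    (A : Type) [BooleanAlgebra A] [Nontrivial A]
    (h : ∀ B : Set A, IsSubBA B → #B < continuum →
      ∃ μ : A → ℝ, FAProbOn B μ ∧ SPOn B μ) :
    ∃ μ : A → ℝ, FAProbOn (Set.univ : Set A) μ ∧ SPOn (Set.univ : Set A) μ := by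
  classical
  letI : MeasurableSpace {S : Set A // #S < continuum} := ⊤
  obtain ⟨lam, hlam1, hlam2⟩ := hNMA A
  haveI hprob : MeasureTheory.IsProbabilityMeasure lam := ⟨hlam1⟩
  have hch : ∀ B : {S : Set A // #S < continuum},
      ∃ μ : A → ℝ, FAProbOn (genBA B.1) μ ∧ SPOn (genBA B.1) μ :=
    fun B => h _ (isSubBA_genBA _) (mk_genBA_lt _ B.2)
  choose ν hν hνsp using hch
  set f : A → {S : Set A // #S < continuum} → ℝ :=
    fun a B => if a ∈ genBA B.1 then ν B a else 0 with hfdef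
  have hnonneg : ∀ a B, 0 ≤ f a B := by
    intro a B
    simp only [f]
    split
    · exact (hν B).2.1 a ‹_›
    · exact le_refl 0
  have hle1 : ∀ a B, f a B ≤ 1 := by
    intro a B
    simp only [f]
    split
    · rename_i ha
      have hc : aᶜ ∈ genBA B.1 := (isSubBA_genBA B.1).2.2.1 a ha
      have hadd := (hν B).2.2 a ha aᶜ hc inf_compl_eq_bot
      rw [sup_compl_eq_top, (hν B).1] at hadd
      have hcn : 0 ≤ ν B aᶜ := (hν B).2.1 _ hc
      linarith
    · exact zero_le_one
  have hint : ∀ a, MeasureTheory.Integrable (f a) lam := by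
    intro a
    refine MeasureTheory.Integrable.mono' (MeasureTheory.integrable_const 1)
      measurable_from_top.aestronglyMeasurable ?_
    refine Filter.Eventually.of_forall fun B => ?_
    rw [Real.norm_eq_abs, abs_of_nonneg (hnonneg a B)]
    exact hle1 a B
  have haeS : ∀ a : A, ∀ᵐ B ∂lam, a ∈ B.1 := by
    intro a
    rw [MeasureTheory.ae_iff]
    have hms : MeasurableSet {B : {S : Set A // #S < continuum} | a ∈ B.1} :=
      MeasurableSpace.measurableSet_top
    have hcomp := MeasureTheory.measure_compl hms (MeasureTheory.measure_ne_top lam _)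
    rw [hlam1, hlam2 a, tsub_self] at hcomp
    simpa [Set.compl_setOf] using hcomp
  refine ⟨fun a => ∫ B, f a B ∂lam, ⟨?_, ?_, ?_⟩, ?_⟩
  · show ∫ B, f ⊤ B ∂lam = 1
    have heq : f ⊤ = fun _ => (1 : ℝ) := by
      funext B
      simp only [f]
      rw [if_pos (isSubBA_genBA B.1).2.1]
      exact (hν B).1
    rw [heq, MeasureTheory.integral_const]
    simp
  · intro a _
    exact MeasureTheory.integral_nonneg fun B => hnonneg a B
  · intro a _ b _ hab
    show ∫ B, f (a ⊔ b) B ∂lam = (∫ B, f a B ∂lam) + ∫ B, f b B ∂lam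
    have hcong : f (a ⊔ b) =ᵐ[lam] f a + f b := by
      filter_upwards [haeS a, haeS b] with B haB hbB
      have ha' : a ∈ genBA B.1 := subset_genBA _ haB
      have hb' : b ∈ genBA B.1 := subset_genBA _ hbB
      have hs' : a ⊔ b ∈ genBA B.1 := (isSubBA_genBA B.1).2.2.2 a ha' b hb'
      simp only [f, Pi.add_apply]
      rw [if_pos hs', if_pos ha', if_pos hb']
      exact (hν B).2.2 a ha' b hb' hab
    rw [MeasureTheory.integral_congr_ae hcong]
    simp only [Pi.add_apply]
    exact MeasureTheory.integral_add (hint a) (hint b)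
  · intro a _ ha0
    show 0 < ∫ B, f a B ∂lam
    refine (MeasureTheory.integral_pos_iff_support_of_nonneg (hnonneg a) (hint a)).2 ?_
    have hsub : {B : {S : Set A // #S < continuum} | a ∈ B.1} ⊆ Function.support (f a) := by
      intro B hB
      have ha' : a ∈ genBA B.1 := subset_genBA _ hB
      have hpos : 0 < ν B a := hνsp B a ha' ha0
      simp only [Function.mem_support, f]
      rw [if_pos ha']
      exact ne_of_gt hpos
    calc (0 : ENNReal) < 1 := zero_lt_one
      _ = lam {B | a ∈ B.1} := (hlam2 a).symm
      _ ≤ lam (Function.support (f a)) := MeasureTheory.measure_mono hsub
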